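/- Splitting of a vertex structure's type induces a splitting of its typing context: if Ω; ∅ ⊢ V : τ and τ ⇝ τ₁ ⋈ τ₂, then there exist Ω₁ and Ω₂ with Ω ⇝ Ω₁ ⋈ Ω₂ such that Ω₁; ∅ ⊢ V : τ₁ and Ω₂; ∅ ⊢ V : τ₂. -/

import Mathlib

/-- Availability annotations -/
inductive Avail : Type
  | avail : Avail
  | unavail : Avail
deriving DecidableEq

/-- Vertex structure (VS) types: single vertex, annotated products,
    type variables, corecursive types. -/
inductive VSTy : Type
  | vert : VSTy
  | prod : VSTy → Avail → VSTy → Avail → VSTy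
  | tvar : ℕ → VSTy
  | corec : ℕ → VSTy → VSTy
deriving DecidableEq

/-- Substitution of a VS type for a type variable (capture-avoiding
    in the sense of not descending under a binder that rebinds `t`). -/
def VSTy.subst (t : ℕ) (σ : VSTy) : VSTy → VSTy
  | .vert => .vert
  | .prod τ₁ a₁ τ₂ a₂ => .prod (VSTy.subst t σ τ₁) a₁ (VSTy.subst t σ τ₂) a₂
  | .tvar s => if s = t then σ else .tvar s
  | .corec s τ => if s = t then .corec s τ else .corec s (VSTy.subst t σ τ)

/-- VS subtyping. -/
inductive SubTy : VSTy → VSTy → Prop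
  | refl (τ : VSTy) : SubTy τ τ
  | trans {τ τ'' τ' : VSTy} : SubTy τ τ'' → SubTy τ'' τ' → SubTy τ τ'
  | prodLeft (τ₁ : VSTy) (a₁ : Avail) (τ₂ : VSTy) (a₂ : Avail) (τ₃ : VSTy) :
      SubTy (.prod τ₁ a₁ τ₂ a₂) (.prod τ₃ .unavail τ₂ a₂)
  | prodRight (τ₁ : VSTy) (a₁ : Avail) (τ₂ : VSTy) (a₂ : Avail) (τ₃ : VSTy) :
      SubTy (.prod τ₁ a₁ τ₂ a₂) (.prod τ₁ a₁ τ₃ .unavail)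
  | prodCong {τ₁ τ₁' τ₂ τ₂' : VSTy} (a₁ a₂ : Avail) :
      SubTy τ₁ τ₁' → SubTy τ₂ τ₂' → SubTy (.prod τ₁ a₁ τ₂ a₂) (.prod τ₁' a₁ τ₂' a₂)
  | corec1 (t : ℕ) (τ : VSTy) : SubTy (.corec t τ) (VSTy.subst t (.corec t τ) τ)
  | corec2 (t : ℕ) (τ : VSTy) : SubTy (VSTy.subst t (.corec t τ) τ) (.corec t τ)

/-- VS type splitting  τ ⇝ τ₁ ⋈ τ₂. -/
inductive VSplit : VSTy → VSTy → VSTy → Prop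
  | prod (τ₁ τ₂ : VSTy) :
      VSplit (.prod τ₁ .avail τ₂ .avail)
            (.prod τ₁ .avail τ₂ .unavail)
            (.prod τ₁ .unavail τ₂ .avail)
  | both {τ₁ τ₁' τ₁'' τ₂ τ₂' τ₂'' : VSTy} :
      VSplit τ₁ τ₁' τ₁'' → VSplit τ₂ τ₂' τ₂'' →
      VSplit (.prod τ₁ .avail τ₂ .avail)
            (.prod τ₁' .avail τ₂' .avail)
            (.prod τ₁'' .avail τ₂'' .avail)
  | left {τ₁ τ₁' τ₁'' : VSTy} (τ₂ : VSTy) (a : Avail) :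
      VSplit τ₁ τ₁' τ₁'' →
      VSplit (.prod τ₁ .avail τ₂ a)
            (.prod τ₁' .avail τ₂ a)
            (.prod τ₁'' .avail τ₂ .unavail)
  | right {τ₂ τ₂' τ₂'' : VSTy} (τ₁ : VSTy) (a : Avail) :
      VSplit τ₂ τ₂' τ₂'' →
      VSplit (.prod τ₁ a τ₂ .avail)
            (.prod τ₁ a τ₂' .avail)
            (.prod τ₁ .unavail τ₂'' .avail)
  | corec {t : ℕ} {τ τ₁ τ₂ : VSTy} :
      VSplit (VSTy.subst t (.corec t τ) τ) τ₁ τ₂ → VSplit (.corec t τ) τ₁ τ₂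
  | sub {τ τ₁ τ₁' τ₂ : VSTy} :
      VSplit τ τ₁' τ₂ → SubTy τ₁' τ₁ → VSplit τ τ₁ τ₂
  | comm {τ τ₁ τ₂ : VSTy} : VSplit τ τ₂ τ₁ → VSplit τ τ₁ τ₂

/-- Names bound in contexts: VS variables or generators. -/
inductive VName : Type
  | var : ℕ → VName
  | gen : ℕ → VName
deriving DecidableEq

/-- A context binds names to VS types. -/
abbrev Ctx := List (VName × VSTy)

/-- Affine context splitting  Ω ⇝ Ω₁ ⋈ Ω₂. -/
inductive CtxSplit : Ctx → Ctx → Ctx → Prop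
  | empty : CtxSplit [] [] []
  | comm {Ω Ω₁ Ω₂ : Ctx} : CtxSplit Ω Ω₂ Ω₁ → CtxSplit Ω Ω₁ Ω₂
  | bind {Ω Ω₁ Ω₂ : Ctx} (x : VName) (τ : VSTy) :
      CtxSplit Ω Ω₁ Ω₂ → CtxSplit ((x, τ) :: Ω) ((x, τ) :: Ω₁) Ω₂
  | typeSplit {Ω Ω₁ Ω₂ : Ctx} {τ τ₁ τ₂ : VSTy} (x : VName) :
      CtxSplit Ω Ω₁ Ω₂ → VSplit τ τ₁ τ₂ →
      CtxSplit ((x, τ) :: Ω) ((x, τ₁) :: Ω₁) ((x, τ₂) :: Ω₂)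

/-- Vertex structures. -/
inductive VS : Type
  | var : ℕ → VS
  | gen : ℕ → VS
  | pair : VS → VS → VS
  | fst : VS → VS
  | snd : VS → VS
deriving DecidableEq

/-- Typing of vertex structures:  Ω; Ψ ⊢ V : τ, with affine context Ω
    and unrestricted context Ψ. -/
inductive HasTy : Ctx → Ctx → VS → VSTy → Prop
  | omegaVar {Ω Ψ : Ctx} {u : ℕ} {τ : VSTy} :
      (VName.var u, τ) ∈ Ω → HasTy Ω Ψ (.var u) τ
  | psiVar {Ω Ψ : Ctx} {u : ℕ} {τ : VSTy} :
      (VName.var u, τ) ∈ Ψ → HasTy Ω Ψ (.var u) τ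
  | omegaGen {Ω Ψ : Ctx} {g : ℕ} {τ : VSTy} :
      (VName.gen g, τ) ∈ Ω → HasTy Ω Ψ (.gen g) τ
  | psiGen {Ω Ψ : Ctx} {g : ℕ} {τ : VSTy} :
      (VName.gen g, τ) ∈ Ψ → HasTy Ω Ψ (.gen g) τ
  | pair {Ω Ω₁ Ω₂ Ψ : Ctx} {V₁ V₂ : VS} {τ₁ τ₂ : VSTy} :
      CtxSplit Ω Ω₁ Ω₂ → HasTy Ω₁ Ψ V₁ τ₁ → HasTy Ω₂ Ψ V₂ τ₂ →
      HasTy Ω Ψ (.pair V₁ V₂) (.prod τ₁ .avail τ₂ .avail)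
  | onlyLeftPair {Ω Ψ Ψ' : Ctx} {V₁ V₂ : VS} {τ₁ τ₂ : VSTy} :
      HasTy Ω Ψ V₁ τ₁ → HasTy [] Ψ' V₂ τ₂ →
      HasTy Ω Ψ (.pair V₁ V₂) (.prod τ₁ .avail τ₂ .unavail)
  | onlyRightPair {Ω Ψ Ψ' : Ctx} {V₁ V₂ : VS} {τ₁ τ₂ : VSTy} :
      HasTy [] Ψ' V₁ τ₁ → HasTy Ω Ψ V₂ τ₂ →
      HasTy Ω Ψ (.pair V₁ V₂) (.prod τ₁ .unavail τ₂ .avail)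
  | fst {Ω Ψ : Ctx} {V : VS} {τ₁ τ₂ : VSTy} {a : Avail} :
      HasTy Ω Ψ V (.prod τ₁ .avail τ₂ a) → HasTy Ω Ψ (.fst V) τ₁
  | snd {Ω Ψ : Ctx} {V : VS} {τ₁ τ₂ : VSTy} {a : Avail} :
      HasTy Ω Ψ V (.prod τ₁ a τ₂ .avail) → HasTy Ω Ψ (.snd V) τ₂
  | sub {Ω Ψ : Ctx} {V : VS} {τ' τ : VSTy} :
      HasTy Ω Ψ V τ' → SubTy τ' τ → HasTy Ω Ψ V τ

/-- Big-step normalization of vertex structures  V ↓ V'. -/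
inductive VNorm : VS → VS → Prop
  | var (u : ℕ) : VNorm (.var u) (.var u)
  | gen (g : ℕ) : VNorm (.gen g) (.gen g)
  | pair {V₁ V₁' V₂ V₂' : VS} :
      VNorm V₁ V₁' → VNorm V₂ V₂' → VNorm (.pair V₁ V₂) (.pair V₁' V₂')
  | fstPair {V V₁ V₂ : VS} : VNorm V (.pair V₁ V₂) → VNorm (.fst V) V₁
  | fstNotPair {V V' : VS} :
      VNorm V V' → (∀ V₁ V₂, V' ≠ .pair V₁ V₂) → VNorm (.fst V) (.fst V')
  | sndPair {V V₁ V₂ : VS} : VNorm V (.pair V₁ V₂) → VNorm (.snd V) V₂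
  | sndNotPair {V V' : VS} :
      VNorm V V' → (∀ V₁ V₂, V' ≠ .pair V₁ V₂) → VNorm (.snd V) (.snd V')

/-- Vertex structure equivalence  Ψ ⊢ V ≡ V' : τ. -/
inductive VSEquiv : Ctx → VS → VS → VSTy → Prop
  | refl {Ψ : Ctx} {V : VS} {τ : VSTy} :
      HasTy [] Ψ V τ → VSEquiv Ψ V V τ
  | comm {Ψ : Ctx} {V V' : VS} {τ : VSTy} :
      VSEquiv Ψ V' V τ → VSEquiv Ψ V V' τ
  | trans {Ψ : Ctx} {V V'' V' : VS} {τ : VSTy} :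
      VSEquiv Ψ V V'' τ → VSEquiv Ψ V'' V' τ → VSEquiv Ψ V V' τ
  | pair {Ψ : Ctx} {V₁ V₁' V₂ V₂' : VS} {τ₁ τ₂ : VSTy} :
      VSEquiv Ψ V₁ V₁' τ₁ → VSEquiv Ψ V₂ V₂' τ₂ →
      VSEquiv Ψ (.pair V₁ V₂) (.pair V₁' V₂') (.prod τ₁ .avail τ₂ .avail)
  | onlyLeftPair {Ψ Ψ' : Ctx} {V₁ V₁' V₂ V₂' : VS} {τ₁ τ₂ : VSTy} :
      VSEquiv Ψ V₁ V₁' τ₁ → VSEquiv Ψ' V₂ V₂' τ₂ →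
      VSEquiv Ψ (.pair V₁ V₂) (.pair V₁' V₂') (.prod τ₁ .avail τ₂ .unavail)
  | onlyRightPair {Ψ Ψ' : Ctx} {V₁ V₁' V₂ V₂' : VS} {τ₁ τ₂ : VSTy} :
      VSEquiv Ψ' V₁ V₁' τ₁ → VSEquiv Ψ V₂ V₂' τ₂ →
      VSEquiv Ψ (.pair V₁ V₂) (.pair V₁' V₂') (.prod τ₁ .unavail τ₂ .avail)
  | fst {Ψ : Ctx} {V V' : VS} {τ₁ τ₂ : VSTy} {a : Avail} :
      VSEquiv Ψ V V' (.prod τ₁ .avail τ₂ a) → VSEquiv Ψ (.fst V) (.fst V') τ₁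
  | snd {Ψ : Ctx} {V V' : VS} {τ₁ τ₂ : VSTy} {a : Avail} :
      VSEquiv Ψ V V' (.prod τ₁ a τ₂ .avail) → VSEquiv Ψ (.snd V) (.snd V') τ₂
  | fstPair {Ψ : Ctx} {V V₁ V₂ : VS} {τ₁ τ₂ : VSTy} {a : Avail} :
      VSEquiv Ψ V (.pair V₁ V₂) (.prod τ₁ .avail τ₂ a) →
      VSEquiv Ψ (.fst V) V₁ τ₁
  | sndPair {Ψ : Ctx} {V V₁ V₂ : VS} {τ₁ τ₂ : VSTy} {a : Avail} :
      VSEquiv Ψ V (.pair V₁ V₂) (.prod τ₁ a τ₂ .avail) →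
      VSEquiv Ψ (.snd V) V₂ τ₂
  | sub {Ψ : Ctx} {V V' : VS} {τ' τ : VSTy} :
      VSEquiv Ψ V V' τ' → SubTy τ' τ → VSEquiv Ψ V V' τ

/-- VNeutral vertex structures: variables, generators, and their projections. -/
inductive VNeutral : VS → Prop
  | var (u : ℕ) : VNeutral (.var u)
  | gen (g : ℕ) : VNeutral (.gen g)
  | fst {V : VS} : VNeutral V → VNeutral (.fst V)
  | snd {V : VS} : VNeutral V → VNeutral (.snd V)

/-- VNormal vertex structures: neutral structures and pairs of normal structures. -/
inductive VNormal : VS → Prop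
  | neutral {V : VS} : VNeutral V → VNormal V
  | pair {V₁ V₂ : VS} : VNormal V₁ → VNormal V₂ → VNormal (.pair V₁ V₂)

/-- Vertex paths: a generator followed by a sequence of projections. -/
inductive IsPath : VS → Prop
  | gen (g : ℕ) : IsPath (.gen g)
  | fst {p : VS} : IsPath p → IsPath (.fst p)
  | snd {p : VS} : IsPath p → IsPath (.snd p)

/-- A context containing only generator bindings. -/
def GenOnly (Ω : Ctx) : Prop := ∀ e ∈ Ω, ∃ g τ, e = (VName.gen g, τ)

/-- Substitution of a vertex structure for a VS variable. -/
def VS.subst (u : ℕ) (W : VS) : VS → VS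
  | .var v => if v = u then W else .var v
  | .gen g => .gen g
  | .pair V₁ V₂ => .pair (VS.subst u W V₁) (VS.subst u W V₂)
  | .fst V => .fst (VS.subst u W V)
  | .snd V => .snd (VS.subst u W V)
theorem vsubR {τ a b b' : VSTy} (h : VSplit τ a b) (s : SubTy b b') : VSplit τ a b' :=
  .comm (.sub (.comm h) s)

theorem vsplit_sub {τ τ₁ τ₂ : VSTy} (h : VSplit τ τ₁ τ₂) : SubTy τ τ₁ ∧ SubTy τ τ₂ := by
  induction h with
  | prod τ₁ τ₂ => exact ⟨.prodRight τ₁ .avail τ₂ .avail τ₂, .prodLeft τ₁ .avail τ₂ .avail τ₁⟩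
  | both h1 h2 ih1 ih2 => exact ⟨.prodCong _ _ ih1.1 ih2.1, .prodCong _ _ ih1.2 ih2.2⟩
  | left B a h ih =>
      exact ⟨.prodCong _ _ ih.1 (.refl _),
        .trans (.prodCong _ _ ih.2 (.refl _)) (.prodRight _ .avail B a B)⟩
  | right A a h ih =>
      exact ⟨.prodCong _ _ (.refl _) ih.1,
        .trans (.prodCong _ _ (.refl _) ih.2) (.prodLeft A a _ .avail A)⟩
  | corec h ih => exact ⟨.trans (.corec1 _ _) ih.1, .trans (.corec1 _ _) ih.2⟩
  | sub h st ih => exact ⟨.trans ih.1 st, ih.2⟩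
  | comm h ih => exact ⟨ih.2, ih.1⟩
theorem subsplit_prodLeft {T σ₁ σ₂ : VSTy} (h : VSplit T σ₁ σ₂) :
    ∀ {B T₃ : VSTy} {a₂ : Avail}, T = .prod T₃ .unavail B a₂ → ∀ (A : VSTy) (a₁ : Avail),
    ∃ σ₁' σ₂', VSplit (.prod A a₁ B a₂) σ₁' σ₂' ∧ SubTy σ₁' σ₁ ∧ SubTy σ₂' σ₂ := by
  induction h with
  | prod τ₁ τ₂ => intro B T₃ a₂ hT; simp at hT
  | both h1 h2 ih1 ih2 => intro B T₃ a₂ hT; simp at hT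
  | left B' a h ih => intro B T₃ a₂ hT; simp at hT
  | corec h ih => intro B T₃ a₂ hT; simp at hT
  | right A' a h ih =>
      intro B T₃ a₂ hT A a₁
      simp only [VSTy.prod.injEq] at hT
      obtain ⟨rfl, rfl, rfl, rfl⟩ := hT
      exact ⟨_, _, .right A a₁ h, .prodLeft A a₁ _ .avail A', .prodLeft A .unavail _ .avail A'⟩
  | sub h st ih =>
      intro B T₃ a₂ hT A a₁
      obtain ⟨x, y, sp, s1, s2⟩ := ih hT A a₁
      exact ⟨x, y, sp, .trans s1 st, s2⟩
  | comm h ih =>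
      intro B T₃ a₂ hT A a₁
      obtain ⟨x, y, sp, s1, s2⟩ := ih hT A a₁
      exact ⟨y, x, .comm sp, s2, s1⟩

theorem subsplit_prodRight {T σ₁ σ₂ : VSTy} (h : VSplit T σ₁ σ₂) :
    ∀ {A T₃ : VSTy} {a₁ : Avail}, T = .prod A a₁ T₃ .unavail → ∀ (B : VSTy) (a₂ : Avail),
    ∃ σ₁' σ₂', VSplit (.prod A a₁ B a₂) σ₁' σ₂' ∧ SubTy σ₁' σ₁ ∧ SubTy σ₂' σ₂ := by
  induction h with
  | prod τ₁ τ₂ => intro A T₃ a₁ hT; simp at hT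
  | both h1 h2 ih1 ih2 => intro A T₃ a₁ hT; simp at hT
  | right A' a h ih => intro A T₃ a₁ hT; simp at hT
  | corec h ih => intro A T₃ a₁ hT; simp at hT
  | left B' a h ih =>
      intro A T₃ a₁ hT B a₂
      simp only [VSTy.prod.injEq] at hT
      obtain ⟨rfl, rfl, rfl, rfl⟩ := hT
      exact ⟨_, _, .left B a₂ h, .prodRight _ .avail B a₂ B', .prodRight _ .avail B .unavail B'⟩
  | sub h st ih =>
      intro A T₃ a₁ hT B a₂
      obtain ⟨x, y, sp, s1, s2⟩ := ih hT B a₂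
      exact ⟨x, y, sp, .trans s1 st, s2⟩
  | comm h ih =>
      intro A T₃ a₁ hT B a₂
      obtain ⟨x, y, sp, s1, s2⟩ := ih hT B a₂
      exact ⟨y, x, .comm sp, s2, s1⟩

theorem subsplit_prodCong {T σ₁ σ₂ : VSTy} (h : VSplit T σ₁ σ₂) :
    ∀ {A' B' A B : VSTy} {a₁ a₂ : Avail}, T = .prod A' a₁ B' a₂ →
    (∀ {s₁ s₂}, VSplit A' s₁ s₂ → ∃ t₁ t₂, VSplit A t₁ t₂ ∧ SubTy t₁ s₁ ∧ SubTy t₂ s₂) →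
    (∀ {s₁ s₂}, VSplit B' s₁ s₂ → ∃ t₁ t₂, VSplit B t₁ t₂ ∧ SubTy t₁ s₁ ∧ SubTy t₂ s₂) →
    SubTy A A' → SubTy B B' →
    ∃ σ₁' σ₂', VSplit (.prod A a₁ B a₂) σ₁' σ₂' ∧ SubTy σ₁' σ₁ ∧ SubTy σ₂' σ₂ := by
  induction h with
  | corec h ih => intro A' B' A B a₁ a₂ hT; simp at hT
  | prod τ₁ τ₂ =>
      intro A' B' A B a₁ a₂ hT ihA ihB sA sB
      simp only [VSTy.prod.injEq] at hT
      obtain ⟨rfl, rfl, rfl, rfl⟩ := hT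
      exact ⟨_, _, .prod A B, .prodCong _ _ sA sB, .prodCong _ _ sA sB⟩
  | both h1 h2 _ _ =>
      intro A' B' A B a₁ a₂ hT ihA ihB sA sB
      simp only [VSTy.prod.injEq] at hT
      obtain ⟨rfl, rfl, rfl, rfl⟩ := hT
      obtain ⟨x, y, spA, sx, sy⟩ := ihA h1
      obtain ⟨u, v, spB, su, sv⟩ := ihB h2
      exact ⟨_, _, .both spA spB, .prodCong _ _ sx su, .prodCong _ _ sy sv⟩
  | left B'' a h _ =>
      intro A' B' A B a₁ a₂ hT ihA ihB sA sB
      simp only [VSTy.prod.injEq] at hT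
      obtain ⟨rfl, rfl, rfl, rfl⟩ := hT
      obtain ⟨x, y, spA, sx, sy⟩ := ihA h
      exact ⟨_, _, .left B _ spA, .prodCong _ _ sx sB, .prodCong _ _ sy sB⟩
  | right A'' a h _ =>
      intro A' B' A B a₁ a₂ hT ihA ihB sA sB
      simp only [VSTy.prod.injEq] at hT
      obtain ⟨rfl, rfl, rfl, rfl⟩ := hT
      obtain ⟨u, v, spB, su, sv⟩ := ihB h
      exact ⟨_, _, .right A _ spB, .prodCong _ _ sA su, .prodCong _ _ sA sv⟩
  | sub h st ih =>
      intro A' B' A B a₁ a₂ hT ihA ihB sA sB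
      obtain ⟨x, y, sp, s1, s2⟩ := ih hT ihA ihB sA sB
      exact ⟨x, y, sp, .trans s1 st, s2⟩
  | comm h ih =>
      intro A' B' A B a₁ a₂ hT ihA ihB sA sB
      obtain ⟨x, y, sp, s1, s2⟩ := ih hT ihA ihB sA sB
      exact ⟨y, x, .comm sp, s2, s1⟩

theorem subsplit_corec2 {T σ₁ σ₂ : VSTy} (h : VSplit T σ₁ σ₂) :
    ∀ {t τ}, T = .corec t τ →
    ∃ σ₁' σ₂', VSplit (VSTy.subst t (.corec t τ) τ) σ₁' σ₂' ∧ SubTy σ₁' σ₁ ∧ SubTy σ₂' σ₂ := by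
  induction h with
  | prod τ₁ τ₂ => intro t τ hT; simp at hT
  | both h1 h2 ih1 ih2 => intro t τ hT; simp at hT
  | left B a h ih => intro t τ hT; simp at hT
  | right A a h ih => intro t τ hT; simp at hT
  | corec h ih =>
      intro t τ hT
      simp only [VSTy.corec.injEq] at hT
      obtain ⟨rfl, rfl⟩ := hT
      exact ⟨_, _, h, .refl _, .refl _⟩
  | sub h st ih =>
      intro t τ hT
      obtain ⟨x, y, sp, s1, s2⟩ := ih hT
      exact ⟨x, y, sp, .trans s1 st, s2⟩
  | comm h ih =>
      intro t τ hT
      obtain ⟨x, y, sp, s1, s2⟩ := ih hT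
      exact ⟨y, x, .comm sp, s2, s1⟩

theorem sub_split {τ' τ σ₁ σ₂ : VSTy} (hsub : SubTy τ' τ) (hs : VSplit τ σ₁ σ₂) :
    ∃ σ₁' σ₂', VSplit τ' σ₁' σ₂' ∧ SubTy σ₁' σ₁ ∧ SubTy σ₂' σ₂ := by
  induction hsub generalizing σ₁ σ₂ with
  | refl τ => exact ⟨σ₁, σ₂, hs, .refl _, .refl _⟩
  | trans h1 h2 ih1 ih2 =>
      obtain ⟨a, b, sp, s1, s2⟩ := ih2 hs
      obtain ⟨c, d, sp', t1, t2⟩ := ih1 sp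
      exact ⟨c, d, sp', .trans t1 s1, .trans t2 s2⟩
  | prodLeft τ₁ a₁ τ₂ a₂ τ₃ => exact subsplit_prodLeft hs rfl τ₁ a₁
  | prodRight τ₁ a₁ τ₂ a₂ τ₃ => exact subsplit_prodRight hs rfl τ₂ a₂
  | prodCong a₁ a₂ s1 s2 ih1 ih2 =>
      exact subsplit_prodCong hs rfl (fun h => ih1 h) (fun h => ih2 h) s1 s2
  | corec1 t τ => exact ⟨σ₁, σ₂, .corec hs, .refl _, .refl _⟩
  | corec2 t τ => exact subsplit_corec2 hs rfl
theorem assoc_prodL {T' σ₁ σ₂ : VSTy} (h : VSplit T' σ₁ σ₂) :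
    ∀ {A B : VSTy}, T' = .prod A .avail B .unavail →
    ((∃ ρ, VSplit (.prod A .avail B .avail) ρ σ₂ ∧ VSplit ρ σ₁ (.prod A .unavail B .avail)) ∧
     (∃ ρ, VSplit (.prod A .avail B .avail) ρ σ₁ ∧ VSplit ρ σ₂ (.prod A .unavail B .avail))) := by
  induction h with
  | prod t1 t2 => intro A B hT; simp at hT
  | both h1 h2 ih1 ih2 => intro A B hT; simp at hT
  | right Ac ac h ih => intro A B hT; simp at hT
  | corec h ih => intro A B hT; simp at hT
  | left Bc ac hA ih =>
      intro A B hT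
      injection hT with e1 e2 e3 e4; subst_vars
      constructor
      · exact ⟨_, .left _ .avail hA, vsubR (.prod _ _) (.prodLeft _ _ _ _ _)⟩
      · exact ⟨_, .left _ .avail (.comm hA), vsubR (.prod _ _) (.prodLeft _ _ _ _ _)⟩
  | sub h st ih =>
      intro A B hT
      obtain ⟨O1, O2⟩ := ih hT
      refine ⟨?_, ?_⟩
      · obtain ⟨ρ, p1, p2⟩ := O1; exact ⟨ρ, p1, .sub p2 st⟩
      · obtain ⟨ρ, p1, p2⟩ := O2; exact ⟨ρ, vsubR p1 st, p2⟩
  | comm h ih =>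
      intro A B hT
      exact ⟨(ih hT).2, (ih hT).1⟩

theorem assoc_prodR {T' σ₁ σ₂ : VSTy} (h : VSplit T' σ₁ σ₂) :
    ∀ {A B : VSTy}, T' = .prod A .unavail B .avail →
    ((∃ ρ, VSplit (.prod A .avail B .avail) ρ σ₂ ∧ VSplit ρ σ₁ (.prod A .avail B .unavail)) ∧
     (∃ ρ, VSplit (.prod A .avail B .avail) ρ σ₁ ∧ VSplit ρ σ₂ (.prod A .avail B .unavail))) := by
  induction h with
  | prod t1 t2 => intro A B hT; simp at hT
  | both h1 h2 ih1 ih2 => intro A B hT; simp at hT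
  | left Bc ac h ih => intro A B hT; simp at hT
  | corec h ih => intro A B hT; simp at hT
  | right Ac ac hB ih =>
      intro A B hT
      injection hT with e1 e2 e3 e4; subst_vars
      constructor
      · exact ⟨_, .right _ .avail hB, vsubR (.comm (.prod _ _)) (.prodRight _ _ _ _ _)⟩
      · exact ⟨_, .right _ .avail (.comm hB), vsubR (.comm (.prod _ _)) (.prodRight _ _ _ _ _)⟩
  | sub h st ih =>
      intro A B hT
      obtain ⟨O1, O2⟩ := ih hT
      refine ⟨?_, ?_⟩
      · obtain ⟨ρ, p1, p2⟩ := O1; exact ⟨ρ, p1, .sub p2 st⟩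
      · obtain ⟨ρ, p1, p2⟩ := O2; exact ⟨ρ, vsubR p1 st, p2⟩
  | comm h ih =>
      intro A B hT
      exact ⟨(ih hT).2, (ih hT).1⟩
theorem assoc_both {T' σ₁ σ₂ : VSTy} (h : VSplit T' σ₁ σ₂) :
    ∀ {A A1 A2 B B1 B2 : VSTy}, T' = .prod A1 .avail B1 .avail →
    VSplit A A1 A2 → VSplit B B1 B2 →
    (∀ {s₁ s₂}, VSplit A1 s₁ s₂ → ∃ ρ, VSplit A ρ s₂ ∧ VSplit ρ s₁ A2) →
    (∀ {s₁ s₂}, VSplit B1 s₁ s₂ → ∃ ρ, VSplit B ρ s₂ ∧ VSplit ρ s₁ B2) →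
    ((∃ ρ, VSplit (.prod A .avail B .avail) ρ σ₂ ∧ VSplit ρ σ₁ (.prod A2 .avail B2 .avail)) ∧
     (∃ ρ, VSplit (.prod A .avail B .avail) ρ σ₁ ∧ VSplit ρ σ₂ (.prod A2 .avail B2 .avail))) := by
  induction h with
  | corec h ih => intro A A1 A2 B B1 B2 hT; simp at hT
  | prod t1 t2 =>
      intro A A1 A2 B B1 B2 hT hA hB QA QB
      injection hT with e1 e2 e3 e4; subst_vars
      constructor
      · exact ⟨_, vsubR (.right _ .avail (.comm hB)) (.prodLeft _ _ _ _ _),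
          .sub (.comm (.left _ .avail (.comm hA))) (.prodRight _ _ _ _ _)⟩
      · exact ⟨_, vsubR (.left _ .avail (.comm hA)) (.prodRight _ _ _ _ _),
          .sub (.comm (.right _ .avail (.comm hB))) (.prodLeft _ _ _ _ _)⟩
  | both h1 h2 ih1 ih2 =>
      intro A A1 A2 B B1 B2 hT hA hB QA QB
      injection hT with e1 e2 e3 e4; subst_vars
      constructor
      · obtain ⟨ρA, pa1, pa2⟩ := QA h1
        obtain ⟨ρB, pb1, pb2⟩ := QB h2
        exact ⟨_, .both pa1 pb1, .both pa2 pb2⟩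
      · obtain ⟨ρA, pa1, pa2⟩ := QA (.comm h1)
        obtain ⟨ρB, pb1, pb2⟩ := QB (.comm h2)
        exact ⟨_, .both pa1 pb1, .both pa2 pb2⟩
  | left Bc ac h1 ih =>
      intro A A1 A2 B B1 B2 hT hA hB QA QB
      injection hT with e1 e2 e3 e4; subst_vars
      constructor
      · obtain ⟨ρA, pa1, pa2⟩ := QA h1
        exact ⟨_, vsubR (.left _ .avail pa1) (.prodRight _ _ _ _ _), .both pa2 hB⟩
      · obtain ⟨ρA, qa1, qa2⟩ := QA (.comm h1)
        exact ⟨_, .both qa1 (.comm hB),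
          .sub (.comm (.left _ .avail (.comm qa2))) (.prodRight _ _ _ _ _)⟩
  | right Ac ac h2 ih =>
      intro A A1 A2 B B1 B2 hT hA hB QA QB
      injection hT with e1 e2 e3 e4; subst_vars
      constructor
      · obtain ⟨ρB, pb1, pb2⟩ := QB h2
        exact ⟨_, vsubR (.right _ .avail pb1) (.prodLeft _ _ _ _ _), .both hA pb2⟩
      · obtain ⟨ρB, qb1, qb2⟩ := QB (.comm h2)
        exact ⟨_, .both (.comm hA) qb1,
          .sub (.comm (.right _ .avail (.comm qb2))) (.prodLeft _ _ _ _ _)⟩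
  | sub h st ih =>
      intro A A1 A2 B B1 B2 hT hA hB QA QB
      obtain ⟨O1, O2⟩ := ih hT hA hB QA QB
      refine ⟨?_, ?_⟩
      · obtain ⟨ρ, p1, p2⟩ := O1; exact ⟨ρ, p1, .sub p2 st⟩
      · obtain ⟨ρ, p1, p2⟩ := O2; exact ⟨ρ, vsubR p1 st, p2⟩
  | comm h ih =>
      intro A A1 A2 B B1 B2 hT hA hB QA QB
      exact ⟨(ih hT hA hB QA QB).2, (ih hT hA hB QA QB).1⟩

theorem assoc_left {T' σ₁ σ₂ : VSTy} (h : VSplit T' σ₁ σ₂) :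
    ∀ {A A1 A2 B : VSTy} {a : Avail}, T' = .prod A1 .avail B a →
    VSplit A A1 A2 →
    (∀ {s₁ s₂}, VSplit A1 s₁ s₂ → ∃ ρ, VSplit A ρ s₂ ∧ VSplit ρ s₁ A2) →
    ((∃ ρ, VSplit (.prod A .avail B a) ρ σ₂ ∧ VSplit ρ σ₁ (.prod A2 .avail B .unavail)) ∧
     (∃ ρ, VSplit (.prod A .avail B a) ρ σ₁ ∧ VSplit ρ σ₂ (.prod A2 .avail B .unavail))) := by
  induction h with
  | corec h ih => intro A A1 A2 B a hT; simp at hT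
  | prod t1 t2 =>
      intro A A1 A2 B a hT hA QA
      injection hT with e1 e2 e3 e4; subst_vars
      constructor
      · exact ⟨_, vsubR (.prod _ _) (.prodLeft _ _ _ _ _), .left _ .unavail hA⟩
      · exact ⟨_, .left _ .avail (.comm hA),
          .sub (.comm (.prod _ _)) (.prodLeft _ _ _ _ _)⟩
  | both h1 h2 ih1 ih2 =>
      intro A A1 A2 B a hT hA QA
      injection hT with e1 e2 e3 e4; subst_vars
      constructor
      · obtain ⟨ρA, pa1, pa2⟩ := QA h1
        exact ⟨_, .both pa1 h2, vsubR (.left _ .avail pa2) (.prodRight _ _ _ _ _)⟩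
      · obtain ⟨ρA, qa1, qa2⟩ := QA (.comm h1)
        exact ⟨_, .both qa1 (.comm h2), vsubR (.left _ .avail qa2) (.prodRight _ _ _ _ _)⟩
  | left Bc ac h1 ih =>
      intro A A1 A2 B a hT hA QA
      injection hT with e1 e2 e3 e4; subst_vars
      constructor
      · obtain ⟨ρA, pa1, pa2⟩ := QA h1
        exact ⟨_, .left _ _ pa1, .left _ _ pa2⟩
      · obtain ⟨ρA, qa1, qa2⟩ := QA (.comm h1)
        exact ⟨_, .comm (.left _ _ (.comm qa1)), .left _ .unavail qa2⟩
  | right Ac ac h2 ih =>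
      intro A A1 A2 B a hT hA QA
      injection hT with e1 e2 e3 e4; subst_vars
      constructor
      · exact ⟨_, vsubR (.right _ .avail h2) (.prodLeft _ _ _ _ _),
          vsubR (.left _ .avail hA) (.prodRight _ _ _ _ _)⟩
      · exact ⟨_, .both (.comm hA) (.comm h2),
          vsubR (.sub (.comm (.prod _ _)) (.prodLeft _ _ _ _ _)) (.prodRight _ _ _ _ _)⟩
  | sub h st ih =>
      intro A A1 A2 B a hT hA QA
      obtain ⟨O1, O2⟩ := ih hT hA QA
      refine ⟨?_, ?_⟩
      · obtain ⟨ρ, p1, p2⟩ := O1; exact ⟨ρ, p1, .sub p2 st⟩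
      · obtain ⟨ρ, p1, p2⟩ := O2; exact ⟨ρ, vsubR p1 st, p2⟩
  | comm h ih =>
      intro A A1 A2 B a hT hA QA
      exact ⟨(ih hT hA QA).2, (ih hT hA QA).1⟩

theorem assoc_left_r {T' σ₁ σ₂ : VSTy} (h : VSplit T' σ₁ σ₂) :
    ∀ {A A1 A2 B : VSTy} {a : Avail}, T' = .prod A2 .avail B .unavail →
    (∀ {s₁ s₂}, VSplit A2 s₁ s₂ → ∃ ρ, VSplit A ρ s₂ ∧ VSplit ρ s₁ A1) →
    ((∃ ρ, VSplit (.prod A .avail B a) ρ σ₂ ∧ VSplit ρ σ₁ (.prod A1 .avail B a)) ∧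
     (∃ ρ, VSplit (.prod A .avail B a) ρ σ₁ ∧ VSplit ρ σ₂ (.prod A1 .avail B a))) := by
  induction h with
  | corec h ih => intro A A1 A2 B a hT; simp at hT
  | prod t1 t2 => intro A A1 A2 B a hT; simp at hT
  | both h1 h2 ih1 ih2 => intro A A1 A2 B a hT; simp at hT
  | right Ac ac h2 ih => intro A A1 A2 B a hT; simp at hT
  | left Bc ac h1 ih =>
      intro A A1 A2 B a hT QA'
      injection hT with e1 e2 e3 e4; subst_vars
      constructor
      · obtain ⟨ρA, pa1, pa2⟩ := QA' h1
        exact ⟨_, .left _ a pa1, .comm (.left _ a (.comm pa2))⟩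
      · obtain ⟨ρA, qa1, qa2⟩ := QA' (.comm h1)
        exact ⟨_, .left _ a qa1, .comm (.left _ a (.comm qa2))⟩
  | sub h st ih =>
      intro A A1 A2 B a hT QA'
      obtain ⟨O1, O2⟩ := ih hT QA'
      refine ⟨?_, ?_⟩
      · obtain ⟨ρ, p1, p2⟩ := O1; exact ⟨ρ, p1, .sub p2 st⟩
      · obtain ⟨ρ, p1, p2⟩ := O2; exact ⟨ρ, vsubR p1 st, p2⟩
  | comm h ih =>
      intro A A1 A2 B a hT QA'
      exact ⟨(ih hT QA').2, (ih hT QA').1⟩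

theorem assoc_right {T' σ₁ σ₂ : VSTy} (h : VSplit T' σ₁ σ₂) :
    ∀ {A B B1 B2 : VSTy} {a : Avail}, T' = .prod A a B1 .avail →
    VSplit B B1 B2 →
    (∀ {s₁ s₂}, VSplit B1 s₁ s₂ → ∃ ρ, VSplit B ρ s₂ ∧ VSplit ρ s₁ B2) →
    ((∃ ρ, VSplit (.prod A a B .avail) ρ σ₂ ∧ VSplit ρ σ₁ (.prod A .unavail B2 .avail)) ∧
     (∃ ρ, VSplit (.prod A a B .avail) ρ σ₁ ∧ VSplit ρ σ₂ (.prod A .unavail B2 .avail))) := by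
  induction h with
  | corec h ih => intro A B B1 B2 a hT; simp at hT
  | prod t1 t2 =>
      intro A B B1 B2 a hT hB QB
      injection hT with e1 e2 e3 e4; subst_vars
      constructor
      · exact ⟨_, .right _ .avail (.comm hB),
          .sub (.prod _ _) (.prodRight _ _ _ _ _)⟩
      · exact ⟨_, vsubR (.comm (.prod _ _)) (.prodRight _ _ _ _ _), .right _ .unavail hB⟩
  | both h1 h2 ih1 ih2 =>
      intro A B B1 B2 a hT hB QB
      injection hT with e1 e2 e3 e4; subst_vars
      constructor
      · obtain ⟨ρB, pb1, pb2⟩ := QB h2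
        exact ⟨_, .both h1 pb1, vsubR (.right _ .avail pb2) (.prodLeft _ _ _ _ _)⟩
      · obtain ⟨ρB, qb1, qb2⟩ := QB (.comm h2)
        exact ⟨_, .both (.comm h1) qb1, vsubR (.right _ .avail qb2) (.prodLeft _ _ _ _ _)⟩
  | right Ac ac h2 ih =>
      intro A B B1 B2 a hT hB QB
      injection hT with e1 e2 e3 e4; subst_vars
      constructor
      · obtain ⟨ρB, pb1, pb2⟩ := QB h2
        exact ⟨_, .right _ _ pb1, .right _ _ pb2⟩
      · obtain ⟨ρB, qb1, qb2⟩ := QB (.comm h2)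
        exact ⟨_, .comm (.right _ _ (.comm qb1)), .right _ .unavail qb2⟩
  | left Bc ac h1 ih =>
      intro A B B1 B2 a hT hB QB
      injection hT with e1 e2 e3 e4; subst_vars
      constructor
      · exact ⟨_, vsubR (.left _ .avail h1) (.prodRight _ _ _ _ _),
          vsubR (.right _ .avail hB) (.prodLeft _ _ _ _ _)⟩
      · exact ⟨_, .both (.comm h1) (.comm hB),
          vsubR (.sub (.prod _ _) (.prodRight _ _ _ _ _)) (.prodLeft _ _ _ _ _)⟩
  | sub h st ih =>
      intro A B B1 B2 a hT hB QB
      obtain ⟨O1, O2⟩ := ih hT hB QB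
      refine ⟨?_, ?_⟩
      · obtain ⟨ρ, p1, p2⟩ := O1; exact ⟨ρ, p1, .sub p2 st⟩
      · obtain ⟨ρ, p1, p2⟩ := O2; exact ⟨ρ, vsubR p1 st, p2⟩
  | comm h ih =>
      intro A B B1 B2 a hT hB QB
      exact ⟨(ih hT hB QB).2, (ih hT hB QB).1⟩

theorem assoc_right_r {T' σ₁ σ₂ : VSTy} (h : VSplit T' σ₁ σ₂) :
    ∀ {A B B1 B2 : VSTy} {a : Avail}, T' = .prod A .unavail B2 .avail →
    (∀ {s₁ s₂}, VSplit B2 s₁ s₂ → ∃ ρ, VSplit B ρ s₂ ∧ VSplit ρ s₁ B1) →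
    ((∃ ρ, VSplit (.prod A a B .avail) ρ σ₂ ∧ VSplit ρ σ₁ (.prod A a B1 .avail)) ∧
     (∃ ρ, VSplit (.prod A a B .avail) ρ σ₁ ∧ VSplit ρ σ₂ (.prod A a B1 .avail))) := by
  induction h with
  | corec h ih => intro A B B1 B2 a hT; simp at hT
  | prod t1 t2 => intro A B B1 B2 a hT; simp at hT
  | both h1 h2 ih1 ih2 => intro A B B1 B2 a hT; simp at hT
  | left Bc ac h1 ih => intro A B B1 B2 a hT; simp at hT
  | right Ac ac h2 ih =>
      intro A B B1 B2 a hT QB'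
      injection hT with e1 e2 e3 e4; subst_vars
      constructor
      · obtain ⟨ρB, pb1, pb2⟩ := QB' h2
        exact ⟨_, .right _ a pb1, .comm (.right _ a (.comm pb2))⟩
      · obtain ⟨ρB, qb1, qb2⟩ := QB' (.comm h2)
        exact ⟨_, .right _ a qb1, .comm (.right _ a (.comm qb2))⟩
  | sub h st ih =>
      intro A B B1 B2 a hT QB'
      obtain ⟨O1, O2⟩ := ih hT QB'
      refine ⟨?_, ?_⟩
      · obtain ⟨ρ, p1, p2⟩ := O1; exact ⟨ρ, p1, .sub p2 st⟩
      · obtain ⟨ρ, p1, p2⟩ := O2; exact ⟨ρ, vsubR p1 st, p2⟩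
  | comm h ih =>
      intro A B B1 B2 a hT QB'
      exact ⟨(ih hT QB').2, (ih hT QB').1⟩

theorem vsplit_assoc2 {τ α β : VSTy} (h1 : VSplit τ α β) :
    (∀ {σ₁ σ₂ : VSTy}, VSplit α σ₁ σ₂ → ∃ ρ, VSplit τ ρ σ₂ ∧ VSplit ρ σ₁ β) ∧
    (∀ {σ₁ σ₂ : VSTy}, VSplit β σ₁ σ₂ → ∃ ρ, VSplit τ ρ σ₂ ∧ VSplit ρ σ₁ α) := by
  induction h1 with
  | prod A B =>
      exact ⟨fun h2 => (assoc_prodL h2 rfl).1, fun h2 => (assoc_prodR h2 rfl).1⟩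
  | both hA hB ihA ihB =>
      exact ⟨fun h2 => (assoc_both h2 rfl hA hB (fun h => ihA.1 h) (fun h => ihB.1 h)).1,
             fun h2 => (assoc_both h2 rfl (.comm hA) (.comm hB)
               (fun h => ihA.2 h) (fun h => ihB.2 h)).1⟩
  | left B a hA ih =>
      exact ⟨fun h2 => (assoc_left h2 rfl hA (fun h => ih.1 h)).1,
             fun h2 => (assoc_left_r h2 rfl (fun h => ih.2 h)).1⟩
  | right A a hB ih =>
      exact ⟨fun h2 => (assoc_right h2 rfl hB (fun h => ih.1 h)).1,
             fun h2 => (assoc_right_r h2 rfl (fun h => ih.2 h)).1⟩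
  | corec h ih =>
      refine ⟨fun h2 => ?_, fun h2 => ?_⟩
      · obtain ⟨ρ, p, q⟩ := ih.1 h2; exact ⟨ρ, .corec p, q⟩
      · obtain ⟨ρ, p, q⟩ := ih.2 h2; exact ⟨ρ, .corec p, q⟩
  | sub h st ih =>
      refine ⟨fun h2 => ?_, fun h2 => ?_⟩
      · obtain ⟨x, y, sp, s1, s2⟩ := sub_split st h2
        obtain ⟨ρ, p, q⟩ := ih.1 sp
        exact ⟨ρ, vsubR p s2, .sub q s1⟩
      · obtain ⟨ρ, p, q⟩ := ih.2 h2
        exact ⟨ρ, p, vsubR q st⟩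
  | comm h ih => exact ⟨ih.2, ih.1⟩

theorem vsplit_assoc {τ α β σ₁ σ₂ : VSTy} (h1 : VSplit τ α β) (h2 : VSplit α σ₁ σ₂) :
    ∃ ρ, VSplit τ ρ σ₂ ∧ VSplit ρ σ₁ β := (vsplit_assoc2 h1).1 h2
theorem ctxsplit_nil {Ω Ω₁ Ω₂ : Ctx} (h : CtxSplit Ω Ω₁ Ω₂) (hΩ : Ω = []) :
    Ω₁ = [] ∧ Ω₂ = [] := by
  induction h with
  | empty => exact ⟨rfl, rfl⟩
  | comm h ih => exact ⟨(ih hΩ).2, (ih hΩ).1⟩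
  | bind x τ h ih => simp at hΩ
  | typeSplit x h hτ ih => simp at hΩ

theorem ctxsplit_cons_inv {Ω₀ Ω₁ Ω₂ : Ctx} (h : CtxSplit Ω₀ Ω₁ Ω₂) :
    ∀ {x : VName} {τ : VSTy} {Ω : Ctx}, Ω₀ = (x, τ) :: Ω →
    (∃ Ω₁', Ω₁ = (x, τ) :: Ω₁' ∧ CtxSplit Ω Ω₁' Ω₂) ∨
    (∃ Ω₂', Ω₂ = (x, τ) :: Ω₂' ∧ CtxSplit Ω Ω₁ Ω₂') ∨
    (∃ τ₁ τ₂ Ω₁' Ω₂', Ω₁ = (x, τ₁) :: Ω₁' ∧ Ω₂ = (x, τ₂) :: Ω₂' ∧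
      VSplit τ τ₁ τ₂ ∧ CtxSplit Ω Ω₁' Ω₂') := by
  induction h with
  | empty => intro x τ Ω hΩ; simp at hΩ
  | comm h ih =>
      intro x τ Ω hΩ
      rcases ih hΩ with ⟨Ω', rfl, h'⟩ | ⟨Ω', rfl, h'⟩ | ⟨τ₁, τ₂, Γ₁, Γ₂, rfl, rfl, hτ, h'⟩
      · exact .inr (.inl ⟨Ω', rfl, .comm h'⟩)
      · exact .inl ⟨Ω', rfl, .comm h'⟩
      · exact .inr (.inr ⟨τ₂, τ₁, Γ₂, Γ₁, rfl, rfl, .comm hτ, .comm h'⟩)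
  | bind y σ h ih =>
      intro x τ Ω hΩ
      injection hΩ with e1 e2
      injection e1 with e3 e4
      subst_vars
      exact .inl ⟨_, rfl, h⟩
  | typeSplit y h hτ ih =>
      intro x τ Ω hΩ
      injection hΩ with e1 e2
      injection e1 with e3 e4
      subst_vars
      exact .inr (.inr ⟨_, _, _, _, rfl, rfl, hτ, h⟩)

theorem ctxsplit_refl_nil : ∀ Ω : Ctx, CtxSplit Ω Ω [] := by
  intro Ω
  induction Ω with
  | nil => exact .empty
  | cons p Ω ih => exact .bind p.1 p.2 ih

theorem ctxsplit_assoc : ∀ {Ω Ωa Ωb Ω₁ Ω₂ : Ctx}, CtxSplit Ω Ωa Ωb → CtxSplit Ωa Ω₁ Ω₂ →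
    ∃ Ωl, CtxSplit Ω Ωl Ω₂ ∧ CtxSplit Ωl Ω₁ Ωb := by
  intro Ω
  induction Ω with
  | nil =>
      intro Ωa Ωb Ω₁ Ω₂ hab h12
      obtain ⟨rfl, rfl⟩ := ctxsplit_nil hab rfl
      obtain ⟨rfl, rfl⟩ := ctxsplit_nil h12 rfl
      exact ⟨[], .empty, .empty⟩
  | cons p Ω ih =>
      intro Ωa Ωb Ω₁ Ω₂ hab h12
      obtain ⟨x, τ⟩ := p
      rcases ctxsplit_cons_inv hab rfl with ⟨Ωa', rfl, hab'⟩ | ⟨Ωb', rfl, hab'⟩ |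
        ⟨τa, τb, Ωa', Ωb', rfl, rfl, hτ, hab'⟩
      · rcases ctxsplit_cons_inv h12 rfl with ⟨Ω₁', rfl, h12'⟩ | ⟨Ω₂', rfl, h12'⟩ |
          ⟨σ₁, σ₂, Ω₁', Ω₂', rfl, rfl, hσ, h12'⟩
        · obtain ⟨Ωl, hl1, hl2⟩ := ih hab' h12'
          exact ⟨(x, τ) :: Ωl, .bind x τ hl1, .bind x τ hl2⟩
        · obtain ⟨Ωl, hl1, hl2⟩ := ih hab' h12'
          exact ⟨Ωl, .comm (.bind x τ (.comm hl1)), hl2⟩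
        · obtain ⟨Ωl, hl1, hl2⟩ := ih hab' h12'
          exact ⟨(x, σ₁) :: Ωl, .typeSplit x hl1 hσ, .bind x σ₁ hl2⟩
      · obtain ⟨Ωl, hl1, hl2⟩ := ih hab' h12
        exact ⟨(x, τ) :: Ωl, .bind x τ hl1, .comm (.bind x τ (.comm hl2))⟩
      · rcases ctxsplit_cons_inv h12 rfl with ⟨Ω₁', rfl, h12'⟩ | ⟨Ω₂', rfl, h12'⟩ |
          ⟨σ₁, σ₂, Ω₁', Ω₂', rfl, rfl, hσ, h12'⟩
        · obtain ⟨Ωl, hl1, hl2⟩ := ih hab' h12'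
          exact ⟨(x, τ) :: Ωl, .bind x τ hl1, .typeSplit x hl2 hτ⟩
        · obtain ⟨Ωl, hl1, hl2⟩ := ih hab' h12'
          exact ⟨(x, τb) :: Ωl, .typeSplit x hl1 (.comm hτ), .comm (.bind x τb (.comm hl2))⟩
        · obtain ⟨ρ, hρ1, hρ2⟩ := vsplit_assoc hτ hσ
          obtain ⟨Ωl, hl1, hl2⟩ := ih hab' h12'
          exact ⟨(x, ρ) :: Ωl, .typeSplit x hl1 hρ1, .typeSplit x hl2 hρ2⟩

theorem ctxsplit_4 {Ω Ωa Ωb Ωa1 Ωa2 Ωb1 Ωb2 : Ctx} (hab : CtxSplit Ω Ωa Ωb)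
    (ha : CtxSplit Ωa Ωa1 Ωa2) (hb : CtxSplit Ωb Ωb1 Ωb2) :
    ∃ Ωl Ωr, CtxSplit Ω Ωl Ωr ∧ CtxSplit Ωl Ωa1 Ωb1 ∧ CtxSplit Ωr Ωa2 Ωb2 := by
  obtain ⟨X, hX1, hX2⟩ := ctxsplit_assoc (.comm hab) hb
  obtain ⟨Y, hY1, hY2⟩ := ctxsplit_assoc (.comm hX2) ha
  obtain ⟨L, hL1, hL2⟩ := ctxsplit_assoc hX1 (.comm hY1)
  exact ⟨Y, L, .comm hL1, hY2, hL2⟩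

theorem mem_split {Ω : Ctx} {x : VName} {τ τ₁ τ₂ : VSTy} (hm : (x, τ) ∈ Ω)
    (hs : VSplit τ τ₁ τ₂) :
    ∃ Ω₁ Ω₂, CtxSplit Ω Ω₁ Ω₂ ∧ (x, τ₁) ∈ Ω₁ ∧ (x, τ₂) ∈ Ω₂ := by
  induction Ω with
  | nil => simp at hm
  | cons p Ω ih =>
      rcases List.mem_cons.1 hm with h | h
      · obtain rfl := h.symm
        exact ⟨(x, τ₁) :: Ω, [(x, τ₂)], .typeSplit x (ctxsplit_refl_nil Ω) hs,
          List.mem_cons_self, List.mem_cons_self⟩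
      · obtain ⟨Ω₁, Ω₂, sp, m1, m2⟩ := ih h
        exact ⟨p :: Ω₁, Ω₂, .bind p.1 p.2 sp, List.mem_cons_of_mem _ m1, m2⟩

theorem ctxsplit_mem {Ω Ω₁ Ω₂ : Ctx} (h : CtxSplit Ω Ω₁ Ω₂) :
    (∀ p ∈ Ω₁, ∃ σ, (p.1, σ) ∈ Ω ∧ SubTy σ p.2) ∧
    (∀ p ∈ Ω₂, ∃ σ, (p.1, σ) ∈ Ω ∧ SubTy σ p.2) := by
  induction h with
  | empty => simp
  | comm h ih => exact ⟨ih.2, ih.1⟩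
  | bind x τ h ih =>
      constructor
      · intro p hp
        rcases List.mem_cons.1 hp with rfl | hp
        · exact ⟨τ, List.mem_cons_self, .refl _⟩
        · obtain ⟨σ, hσ, hs⟩ := ih.1 p hp
          exact ⟨σ, List.mem_cons_of_mem _ hσ, hs⟩
      · intro p hp
        obtain ⟨σ, hσ, hs⟩ := ih.2 p hp
        exact ⟨σ, List.mem_cons_of_mem _ hσ, hs⟩
  | typeSplit x h hτ ih =>
      rename_i Ω' Ω₁' Ω₂' τ τ₁ τ₂
      constructor
      · intro p hp
        rcases List.mem_cons.1 hp with rfl | hp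
        · exact ⟨τ, List.mem_cons_self, (vsplit_sub hτ).1⟩
        · obtain ⟨σ, hσ, hs⟩ := ih.1 p hp
          exact ⟨σ, List.mem_cons_of_mem _ hσ, hs⟩
      · intro p hp
        rcases List.mem_cons.1 hp with rfl | hp
        · exact ⟨τ, List.mem_cons_self, (vsplit_sub hτ).2⟩
        · obtain ⟨σ, hσ, hs⟩ := ih.2 p hp
          exact ⟨σ, List.mem_cons_of_mem _ hσ, hs⟩
def Covers (Ψ' Γ : Ctx) : Prop := ∀ p ∈ Γ, ∃ σ, (p.1, σ) ∈ Ψ' ∧ SubTy σ p.2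

theorem hasTy_to_psi {Ω Ψ : Ctx} {V : VS} {τ : VSTy} (h : HasTy Ω Ψ V τ) :
    ∀ {Ψ' : Ctx}, Covers Ψ' Ω → Covers Ψ' Ψ → HasTy [] Ψ' V τ := by
  induction h with
  | omegaVar hm =>
      intro Ψ' cΩ cΨ
      obtain ⟨σ, hσ, hs⟩ := cΩ _ hm
      exact .sub (.psiVar hσ) hs
  | psiVar hm =>
      intro Ψ' cΩ cΨ
      obtain ⟨σ, hσ, hs⟩ := cΨ _ hm
      exact .sub (.psiVar hσ) hs
  | omegaGen hm =>
      intro Ψ' cΩ cΨ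
      obtain ⟨σ, hσ, hs⟩ := cΩ _ hm
      exact .sub (.psiGen hσ) hs
  | psiGen hm =>
      intro Ψ' cΩ cΨ
      obtain ⟨σ, hσ, hs⟩ := cΨ _ hm
      exact .sub (.psiGen hσ) hs
  | pair hsp h1 h2 ih1 ih2 =>
      intro Ψ' cΩ cΨ
      have c1 : Covers Ψ' _ := fun p hp => by
        obtain ⟨σ, hσ, hs⟩ := (ctxsplit_mem hsp).1 p hp
        obtain ⟨σ', hσ', hs'⟩ := cΩ _ hσ
        exact ⟨σ', hσ', .trans hs' hs⟩
      have c2 : Covers Ψ' _ := fun p hp => by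
        obtain ⟨σ, hσ, hs⟩ := (ctxsplit_mem hsp).2 p hp
        obtain ⟨σ', hσ', hs'⟩ := cΩ _ hσ
        exact ⟨σ', hσ', .trans hs' hs⟩
      exact .pair .empty (ih1 c1 cΨ) (ih2 c2 cΨ)
  | onlyLeftPair h1 h2 ih1 ih2 =>
      intro Ψ' cΩ cΨ
      exact .onlyLeftPair (ih1 cΩ cΨ) h2
  | onlyRightPair h1 h2 ih1 ih2 =>
      intro Ψ' cΩ cΨ
      exact .onlyRightPair h1 (ih2 cΩ cΨ)
  | fst h ih => intro Ψ' cΩ cΨ; exact .fst (ih cΩ cΨ)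
  | snd h ih => intro Ψ' cΩ cΨ; exact .snd (ih cΩ cΨ)
  | sub h st ih => intro Ψ' cΩ cΨ; exact .sub (ih cΩ cΨ) st

theorem toPsi {Ω : Ctx} {V : VS} {τ : VSTy} (h : HasTy Ω [] V τ) : HasTy [] Ω V τ :=
  hasTy_to_psi h (fun p hp => ⟨p.2, hp, .refl _⟩) (by simp [Covers])

theorem main_pair {Ω Ωa Ωb : Ctx} {V₁ V₂ : VS} {A B : VSTy}
    (hsp : CtxSplit Ω Ωa Ωb) (h₁ : HasTy Ωa [] V₁ A) (h₂ : HasTy Ωb [] V₂ B)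
    (ih₁ : ∀ {s₁ s₂}, VSplit A s₁ s₂ →
      ∃ Γ₁ Γ₂, CtxSplit Ωa Γ₁ Γ₂ ∧ HasTy Γ₁ [] V₁ s₁ ∧ HasTy Γ₂ [] V₁ s₂)
    (ih₂ : ∀ {s₁ s₂}, VSplit B s₁ s₂ →
      ∃ Γ₁ Γ₂, CtxSplit Ωb Γ₁ Γ₂ ∧ HasTy Γ₁ [] V₂ s₁ ∧ HasTy Γ₂ [] V₂ s₂)
    {T σ₁ σ₂ : VSTy} (hs : VSplit T σ₁ σ₂) : T = .prod A .avail B .avail →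
    ∃ Ω₁ Ω₂, CtxSplit Ω Ω₁ Ω₂ ∧ HasTy Ω₁ [] (.pair V₁ V₂) σ₁ ∧
      HasTy Ω₂ [] (.pair V₁ V₂) σ₂ := by
  induction hs with
  | corec h ih => intro hT; simp at hT
  | prod t1 t2 =>
      intro hT
      injection hT with e1 e2 e3 e4; subst_vars
      exact ⟨Ωa, Ωb, hsp, .onlyLeftPair h₁ (toPsi h₂), .onlyRightPair (toPsi h₁) h₂⟩
  | both hA hB ihA ihB =>
      intro hT
      injection hT with e1 e2 e3 e4; subst_vars
      obtain ⟨Γ₁, Γ₂, spA, t11, t12⟩ := ih₁ hA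
      obtain ⟨Δ₁, Δ₂, spB, t21, t22⟩ := ih₂ hB
      obtain ⟨Ωl, Ωr, s0, s1, s2⟩ := ctxsplit_4 hsp spA spB
      exact ⟨Ωl, Ωr, s0, .pair s1 t11 t21, .pair s2 t12 t22⟩
  | left Bc ac hA ih =>
      intro hT
      injection hT with e1 e2 e3 e4; subst_vars
      obtain ⟨Γ₁, Γ₂, spA, t11, t12⟩ := ih₁ hA
      obtain ⟨Ωl, hl1, hl2⟩ := ctxsplit_assoc hsp spA
      exact ⟨Ωl, Γ₂, hl1, .pair hl2 t11 h₂, .onlyLeftPair t12 (toPsi h₂)⟩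
  | right Ac ac hB ih =>
      intro hT
      injection hT with e1 e2 e3 e4; subst_vars
      obtain ⟨Γ₁, Γ₂, spB, t21, t22⟩ := ih₂ hB
      obtain ⟨Ωl, hl1, hl2⟩ := ctxsplit_assoc (.comm hsp) spB
      exact ⟨Ωl, Γ₂, hl1, .pair (.comm hl2) h₁ t21, .onlyRightPair (toPsi h₁) t22⟩
  | sub h st ih =>
      intro hT
      obtain ⟨Ω₁, Ω₂, sp, t1, t2⟩ := ih hT
      exact ⟨Ω₁, Ω₂, sp, .sub t1 st, t2⟩
  | comm h ih =>
      intro hT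
      obtain ⟨Ω₁, Ω₂, sp, t1, t2⟩ := ih hT
      exact ⟨Ω₂, Ω₁, .comm sp, t2, t1⟩

theorem main_onlyLeft {Ω Ψ' : Ctx} {V₁ V₂ : VS} {A B : VSTy}
    (h₂ : HasTy [] Ψ' V₂ B)
    (ih₁ : ∀ {s₁ s₂}, VSplit A s₁ s₂ →
      ∃ Γ₁ Γ₂, CtxSplit Ω Γ₁ Γ₂ ∧ HasTy Γ₁ [] V₁ s₁ ∧ HasTy Γ₂ [] V₁ s₂)
    {T σ₁ σ₂ : VSTy} (hs : VSplit T σ₁ σ₂) : T = .prod A .avail B .unavail →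
    ∃ Ω₁ Ω₂, CtxSplit Ω Ω₁ Ω₂ ∧ HasTy Ω₁ [] (.pair V₁ V₂) σ₁ ∧
      HasTy Ω₂ [] (.pair V₁ V₂) σ₂ := by
  induction hs with
  | corec h ih => intro hT; simp at hT
  | prod t1 t2 => intro hT; simp at hT
  | both hA hB ihA ihB => intro hT; simp at hT
  | right Ac ac hB ih => intro hT; simp at hT
  | left Bc ac hA ih =>
      intro hT
      injection hT with e1 e2 e3 e4; subst_vars
      obtain ⟨Γ₁, Γ₂, spA, t11, t12⟩ := ih₁ hA
      exact ⟨Γ₁, Γ₂, spA, .onlyLeftPair t11 h₂, .onlyLeftPair t12 h₂⟩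
  | sub h st ih =>
      intro hT
      obtain ⟨Ω₁, Ω₂, sp, t1, t2⟩ := ih hT
      exact ⟨Ω₁, Ω₂, sp, .sub t1 st, t2⟩
  | comm h ih =>
      intro hT
      obtain ⟨Ω₁, Ω₂, sp, t1, t2⟩ := ih hT
      exact ⟨Ω₂, Ω₁, .comm sp, t2, t1⟩

theorem main_onlyRight {Ω Ψ' : Ctx} {V₁ V₂ : VS} {A B : VSTy}
    (h₁ : HasTy [] Ψ' V₁ A)
    (ih₂ : ∀ {s₁ s₂}, VSplit B s₁ s₂ →
      ∃ Γ₁ Γ₂, CtxSplit Ω Γ₁ Γ₂ ∧ HasTy Γ₁ [] V₂ s₁ ∧ HasTy Γ₂ [] V₂ s₂)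
    {T σ₁ σ₂ : VSTy} (hs : VSplit T σ₁ σ₂) : T = .prod A .unavail B .avail →
    ∃ Ω₁ Ω₂, CtxSplit Ω Ω₁ Ω₂ ∧ HasTy Ω₁ [] (.pair V₁ V₂) σ₁ ∧
      HasTy Ω₂ [] (.pair V₁ V₂) σ₂ := by
  induction hs with
  | corec h ih => intro hT; simp at hT
  | prod t1 t2 => intro hT; simp at hT
  | both hA hB ihA ihB => intro hT; simp at hT
  | left Bc ac hA ih => intro hT; simp at hT
  | right Ac ac hB ih =>
      intro hT
      injection hT with e1 e2 e3 e4; subst_vars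
      obtain ⟨Γ₁, Γ₂, spB, t21, t22⟩ := ih₂ hB
      exact ⟨Γ₁, Γ₂, spB, .onlyRightPair h₁ t21, .onlyRightPair h₁ t22⟩
  | sub h st ih =>
      intro hT
      obtain ⟨Ω₁, Ω₂, sp, t1, t2⟩ := ih hT
      exact ⟨Ω₁, Ω₂, sp, .sub t1 st, t2⟩
  | comm h ih =>
      intro hT
      obtain ⟨Ω₁, Ω₂, sp, t1, t2⟩ := ih hT
      exact ⟨Ω₂, Ω₁, .comm sp, t2, t1⟩

theorem main_aux {Ω Ψ : Ctx} {V : VS} {τ : VSTy} (h : HasTy Ω Ψ V τ) : Ψ = [] →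
    ∀ {σ₁ σ₂ : VSTy}, VSplit τ σ₁ σ₂ →
    ∃ Ω₁ Ω₂, CtxSplit Ω Ω₁ Ω₂ ∧ HasTy Ω₁ [] V σ₁ ∧ HasTy Ω₂ [] V σ₂ := by
  induction h with
  | omegaVar hm =>
      intro _ σ₁ σ₂ hs
      obtain ⟨Ω₁, Ω₂, sp, m1, m2⟩ := mem_split hm hs
      exact ⟨Ω₁, Ω₂, sp, .omegaVar m1, .omegaVar m2⟩
  | psiVar hm => intro hΨ; subst hΨ; simp at hm
  | omegaGen hm =>
      intro _ σ₁ σ₂ hs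
      obtain ⟨Ω₁, Ω₂, sp, m1, m2⟩ := mem_split hm hs
      exact ⟨Ω₁, Ω₂, sp, .omegaGen m1, .omegaGen m2⟩
  | psiGen hm => intro hΨ; subst hΨ; simp at hm
  | pair hsp h1 h2 ih1 ih2 =>
      intro hΨ σ₁ σ₂ hs
      subst hΨ
      exact main_pair hsp h1 h2 (fun hs' => ih1 rfl hs') (fun hs' => ih2 rfl hs') hs rfl
  | onlyLeftPair h1 h2 ih1 ih2 =>
      intro hΨ σ₁ σ₂ hs
      subst hΨ
      exact main_onlyLeft h2 (fun hs' => ih1 rfl hs') hs rfl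
  | onlyRightPair h1 h2 ih1 ih2 =>
      intro hΨ σ₁ σ₂ hs
      subst hΨ
      exact main_onlyRight h1 (fun hs' => ih2 rfl hs') hs rfl
  | fst h ih =>
      intro hΨ σ₁ σ₂ hs
      obtain ⟨Ω₁, Ω₂, sp, t1, t2⟩ := ih hΨ (.left _ _ hs)
      exact ⟨Ω₁, Ω₂, sp, .fst t1, .fst t2⟩
  | snd h ih =>
      intro hΨ σ₁ σ₂ hs
      obtain ⟨Ω₁, Ω₂, sp, t1, t2⟩ := ih hΨ (.right _ _ hs)
      exact ⟨Ω₁, Ω₂, sp, .snd t1, .snd t2⟩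
  | sub h st ih =>
      intro hΨ σ₁ σ₂ hs
      obtain ⟨σ₁', σ₂', hs', s1, s2⟩ := sub_split st hs
      obtain ⟨Ω₁, Ω₂, sp, t1, t2⟩ := ih hΨ hs'
      exact ⟨Ω₁, Ω₂, sp, .sub t1 s1, .sub t2 s2⟩

/-- splitting a VS's type induces a splitting of its context. -/
theorem hasTy_type_split {Ω : Ctx} {V : VS} {τ τ₁ τ₂ : VSTy}
    (h : HasTy Ω [] V τ) (hs : VSplit τ τ₁ τ₂) :
    ∃ Ω₁ Ω₂, CtxSplit Ω Ω₁ Ω₂ ∧ HasTy Ω₁ [] V τ₁ ∧ HasTy Ω₂ [] V τ₂ := by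
  exact main_aux h rfl hs
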